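/- There is a constant C = C(n,s) > 0 such that for all R > 0 and all (x,t) with |x| ≤ R/3 and |t| ≤ R^2/9, one has ∫_{-∞}^{-R^2} ∫_{ℝ^n} M(x-y, t-τ) dy dτ ≤ C/R^{2s}, where M(x,t) = c_{n,s} t^{-(n/2+1+s)} e^{-|x|^2/(4t)}. -/

import Mathlib

open MeasureTheory Real

noncomputable def heatM (n : ℕ) (s c : ℝ) (x : EuclideanSpace ℝ (Fin n)) (t : ℝ) : ℝ :=
  c * t ^ (-((n : ℝ) / 2 + 1 + s)) * Real.exp (-‖x‖ ^ 2 / (4 * t))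

lemma sub_subst_Iio (f : ℝ → ℝ) (t b : ℝ) :
    ∫ τ in Set.Iio b, f (t - τ) = ∫ u in Set.Ioi (t - b), f u := by
  have hmp : MeasurePreserving (fun τ : ℝ => t - τ) volume volume :=
    MeasureTheory.Measure.measurePreserving_sub_left volume t
  have hemb : MeasurableEmbedding (fun τ : ℝ => t - τ) := by
    have : (fun τ : ℝ => t - τ) = fun τ : ℝ => t + (-τ) := by
      funext τ; ring
    rw [this]
    exact ((Homeomorph.neg ℝ).trans (Homeomorph.addLeft t)).isClosedEmbedding.measurableEmbedding
  have hpre : (fun τ : ℝ => t - τ) ⁻¹' Set.Ioi (t - b) = Set.Iio b := by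
    ext τ
    simp [Set.mem_Ioi, Set.mem_Iio, sub_lt_sub_iff_left]
  rw [← hpre, hmp.setIntegral_preimage_emb hemb]

theorem stmt2 (n : ℕ) (hn : 1 ≤ n) (s : ℝ) (hs : s ∈ Set.Ioo (0 : ℝ) 1)
    (c : ℝ) (hc : 0 < c) :
    ∃ C : ℝ, 0 < C ∧ ∀ R : ℝ, 0 < R → ∀ (x : EuclideanSpace ℝ (Fin n)) (t : ℝ),
      ‖x‖ ≤ R / 3 → |t| ≤ R ^ 2 / 9 →
      (∫ τ in Set.Iio (-(R ^ 2)), ∫ y : EuclideanSpace ℝ (Fin n),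
          heatM n s c (x - y) (t - τ)) ≤ C / R ^ (2 * s) := by
  obtain ⟨hs0, hs1⟩ := hs
  set K : ℝ := c * (4 * π) ^ ((n : ℝ) / 2) with hK
  have hKpos : 0 < K := by
    apply mul_pos hc
    exact rpow_pos_of_pos (by positivity) _
  refine ⟨K * (9 / 8 : ℝ) ^ s / s, by positivity, ?_⟩
  intro R hR x t hx ht
  have hRe : (0 : ℝ) < R ^ 2 := by positivity
  have htlb : -(R ^ 2) / 9 ≤ t := by
    have := abs_le.mp ht
    linarith [this.1]
  have hA : (8 / 9 : ℝ) * R ^ 2 ≤ t + R ^ 2 := by linarith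
  have hApos : (0 : ℝ) < t + R ^ 2 := by nlinarith
  -- inner integral formula
  have hinner : ∀ τ ∈ Set.Iio (-(R ^ 2)),
      (∫ y : EuclideanSpace ℝ (Fin n), heatM n s c (x - y) (t - τ))
        = K * (t - τ) ^ (-(1 + s)) := by
    intro τ hτ
    have hτ' : τ < -(R ^ 2) := hτ
    have ha : (0 : ℝ) < t - τ := by nlinarith
    set a : ℝ := t - τ with haa
    have hb : (0 : ℝ) < 1 / (4 * a) := by positivity
    have h1 : ∀ y : EuclideanSpace ℝ (Fin n),
        heatM n s c (x - y) a
          = (c * a ^ (-((n : ℝ) / 2 + 1 + s))) * rexp (-(1 / (4 * a)) * ‖x - y‖ ^ 2) := by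
      intro y
      simp only [heatM]
      congr 2
      ring_nf
    simp_rw [h1]
    rw [MeasureTheory.integral_const_mul]
    have h2 : (∫ y : EuclideanSpace ℝ (Fin n), rexp (-(1 / (4 * a)) * ‖x - y‖ ^ 2))
        = ∫ y : EuclideanSpace ℝ (Fin n), rexp (-(1 / (4 * a)) * ‖y‖ ^ 2) :=
      integral_sub_left_eq_self (fun z => rexp (-(1 / (4 * a)) * ‖z‖ ^ 2)) volume x
    rw [h2, GaussianFourier.integral_rexp_neg_mul_sq_norm hb, finrank_euclideanSpace_fin]
    have h3 : π / (1 / (4 * a)) = 4 * π * a := by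
      field_simp
    rw [h3, Real.mul_rpow (by positivity) ha.le]
    rw [hK, show c * a ^ (-((n : ℝ) / 2 + 1 + s)) * ((4 * π) ^ ((n : ℝ) / 2) * a ^ ((n : ℝ) / 2))
        = c * (4 * π) ^ ((n : ℝ) / 2) * (a ^ (-((n : ℝ) / 2 + 1 + s)) * a ^ ((n : ℝ) / 2)) by ring,
      ← Real.rpow_add ha]
    congr 1
    ring
  rw [MeasureTheory.setIntegral_congr_fun measurableSet_Iio hinner]
  have hsub : (∫ τ in Set.Iio (-(R ^ 2)), K * (t - τ) ^ (-(1 + s)))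
      = ∫ u in Set.Ioi (t + R ^ 2), K * u ^ (-(1 + s)) := by
    have := sub_subst_Iio (fun u => K * u ^ (-(1 + s))) t (-(R ^ 2))
    simpa [sub_neg_eq_add] using this
  rw [hsub, MeasureTheory.integral_const_mul,
    integral_Ioi_rpow_of_lt (by linarith : -(1 + s) < -1) hApos]
  have hval : -(t + R ^ 2) ^ (-(1 + s) + 1) / (-(1 + s) + 1) = (t + R ^ 2) ^ (-s) / s := by
    rw [show -(1 + s) + 1 = -s by ring]
    rw [neg_div, div_neg, neg_neg]
  rw [hval]
  -- final bound
  have hmono : (t + R ^ 2) ^ (-s) ≤ ((8 / 9 : ℝ) * R ^ 2) ^ (-s) :=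
    Real.rpow_le_rpow_of_nonpos (by positivity) hA (by linarith)
  have hsplit : ((8 / 9 : ℝ) * R ^ 2) ^ (-s) = (9 / 8 : ℝ) ^ s * R ^ (-(2 * s)) := by
    rw [Real.mul_rpow (by norm_num) hRe.le]
    congr 1
    · rw [show ((8:ℝ)/9) = ((9:ℝ)/8)⁻¹ by norm_num,
        Real.inv_rpow (by norm_num : (0:ℝ) ≤ 9/8), ← Real.rpow_neg (by norm_num : (0:ℝ) ≤ 9/8),
        neg_neg]
    · rw [← Real.rpow_natCast R 2, ← Real.rpow_mul hR.le]
      congr 1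
      push_cast
      ring
  have hfin : K * ((t + R ^ 2) ^ (-s) / s) ≤ K * ((9 / 8 : ℝ) ^ s * R ^ (-(2 * s)) / s) := by
    apply mul_le_mul_of_nonneg_left _ hKpos.le
    gcongr
    rw [← hsplit]; exact hmono
  refine hfin.trans_eq ?_
  rw [Real.rpow_neg hR.le, div_eq_mul_inv]
  ring
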